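/- Let Ω ⊆ ℝ² be a convex closed set which is admissible (i.e. Ω has nonempty interior, Ω ≠ ℝ², and Ω is not a half-plane or strip bounded by lines of irrational slope). Then the set A_Ω = {(i,j) ∈ ℤ² : inf_{(x,y)∈Ω} (ix + jy) > -∞} contains some (i,j) ≠ (0,0). -/

import Mathlib

/-- `(a,b)` is proportional to a nonzero integer vector (so a line with normal `(a,b)`
has rational slope, possibly infinite). -/
def normalIsRational (a b : ℝ) : Prop :=
  ∃ m n : ℤ, (m, n) ≠ ((0 : ℤ), (0 : ℤ)) ∧ a * (n : ℝ) = b * (m : ℝ)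


lemma aux_sep (Ω : Set (ℝ × ℝ)) (hconv : Convex ℝ Ω) (hcl : IsClosed Ω)
    (hΩ : Ω.Nonempty) {p : ℝ × ℝ} (hp : p ∉ Ω) :
    ∃ w : ℝ × ℝ, w ≠ 0 ∧ ∃ u : ℝ, w.1 * p.1 + w.2 * p.2 < u ∧
      ∀ x ∈ Ω, u < w.1 * x.1 + w.2 * x.2 := by
  obtain ⟨f, u, hfu, hfb⟩ := geometric_hahn_banach_point_closed hconv hcl hp
  set w : ℝ × ℝ := (f (1, 0), f (0, 1)) with hw
  have hf : ∀ q : ℝ × ℝ, f q = w.1 * q.1 + w.2 * q.2 := by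
    intro q
    have : q = q.1 • ((1:ℝ), (0:ℝ)) + q.2 • ((0:ℝ), (1:ℝ)) := by
      simp [Prod.ext_iff]
    rw [this, map_add, map_smul, map_smul]
    simp [hw, mul_comm]
  refine ⟨w, ?_, u, by rw [← hf]; exact hfu, fun x hx => by rw [← hf]; exact hfb x hx⟩
  intro h0
  obtain ⟨b, hb⟩ := hΩ
  have h1 := hfb b hb
  have h2 : w.1 * p.1 + w.2 * p.2 < u := by rw [← hf]; exact hfu
  rw [hf b, h0] at h1
  rw [h0] at h2
  simp at h1 h2
  linarith

lemma aux_par {v w : ℝ × ℝ} (hv : v ≠ 0) (hw : w ≠ 0) (h : v.1 * w.2 = v.2 * w.1) :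
    ∃ t : ℝ, t ≠ 0 ∧ w.1 = t * v.1 ∧ w.2 = t * v.2 := by
  rcases eq_or_ne v.1 0 with h1 | h1
  · have h2 : v.2 ≠ 0 := by
      intro h2; exact hv (Prod.ext h1 h2)
    have hw1 : w.1 = 0 := by
      rw [h1, zero_mul] at h
      rcases mul_eq_zero.mp h.symm with h | h
      · exact absurd h h2
      · exact h
    refine ⟨w.2 / v.2, ?_, ?_, by field_simp⟩
    · intro ht
      have : w.2 = 0 := by
        field_simp at ht; simpa using ht
      exact hw (Prod.ext hw1 this)
    · rw [hw1, h1]; ring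
  · refine ⟨w.1 / v.1, ?_, by field_simp, ?_⟩
    · intro ht
      have hw1 : w.1 = 0 := by field_simp at ht; simpa using ht
      have hw2 : w.2 = 0 := by
        rw [hw1, mul_zero] at h
        rcases mul_eq_zero.mp h with h' | h'
        · exact absurd h' h1
        · exact h'
      exact hw (Prod.ext hw1 hw2)
    · field_simp
      linarith [h]

lemma aux_two (Ω : Set (ℝ × ℝ)) (v w : ℝ × ℝ) (cv cw : ℝ)
    (hv : ∀ x ∈ Ω, cv ≤ v.1 * x.1 + v.2 * x.2)
    (hw : ∀ x ∈ Ω, cw ≤ w.1 * x.1 + w.2 * x.2)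
    (hD : v.1 * w.2 - v.2 * w.1 ≠ 0) :
    ∃ ij : ℤ × ℤ, ij ≠ (0, 0) ∧
      BddBelow ((fun p : ℝ × ℝ => (ij.1 : ℝ) * p.1 + (ij.2 : ℝ) * p.2) '' Ω) := by
  set D : ℝ := v.1 * w.2 - v.2 * w.1 with hDdef
  set U : Set (ℝ × ℝ) :=
    {t : ℝ × ℝ | 0 < (t.1 * w.2 - t.2 * w.1) / D ∧ 0 < (v.1 * t.2 - v.2 * t.1) / D} with hU
  have hUopen : IsOpen U := by
    apply IsOpen.inter
    · exact isOpen_lt continuous_const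
        (((continuous_fst.mul continuous_const).sub
          (continuous_snd.mul continuous_const)).div_const D)
    · exact isOpen_lt continuous_const
        (((continuous_const.mul continuous_snd).sub
          (continuous_const.mul continuous_fst)).div_const D)
  have hUne : U.Nonempty := by
    refine ⟨(v.1 + w.1, v.2 + w.2), ?_, ?_⟩ <;>
    · show (0:ℝ) < _
      have : ((v.1 + w.1) * w.2 - (v.2 + w.2) * w.1) = D := by ring
      have h2 : (v.1 * (v.2 + w.2) - v.2 * (v.1 + w.1)) = D := by ring
      simp only [this, h2, div_self hD]
      norm_num
  have hdense : DenseRange (fun q : ℚ × ℚ => (((q.1 : ℝ), (q.2 : ℝ)) : ℝ × ℝ)) :=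
    Rat.denseRange_cast.prodMap Rat.denseRange_cast
  obtain ⟨q, hq⟩ := hdense.exists_mem_open hUopen hUne
  obtain ⟨ha, hb⟩ := hq
  set a : ℝ := ((q.1 : ℝ) * w.2 - (q.2 : ℝ) * w.1) / D with hadef
  set b : ℝ := (v.1 * (q.2 : ℝ) - v.2 * (q.1 : ℝ)) / D with hbdef
  have key : ∀ x : ℝ × ℝ, (q.1 : ℝ) * x.1 + (q.2 : ℝ) * x.2 =
      a * (v.1 * x.1 + v.2 * x.2) + b * (w.1 * x.1 + w.2 * x.2) := by
    intro x
    rw [hadef, hbdef]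
    field_simp
    ring
  refine ⟨(q.1.num * q.2.den, q.2.num * q.1.den), ?_, ?_⟩
  · intro h0
    rw [Prod.ext_iff] at h0
    obtain ⟨h1, h2⟩ := h0
    simp only [Prod.fst, Prod.snd] at h1 h2
    have hq1 : q.1 = 0 := by
      have hden : ((q.2.den : ℤ)) ≠ 0 := Int.natCast_ne_zero.mpr q.2.den_nz
      have : q.1.num = 0 := by
        rcases mul_eq_zero.mp h1 with h | h
        · exact h
        · exact absurd h hden
      exact Rat.num_eq_zero.mp this
    have hq2 : q.2 = 0 := by
      have hden : ((q.1.den : ℤ)) ≠ 0 := Int.natCast_ne_zero.mpr q.1.den_nz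
      have : q.2.num = 0 := by
        rcases mul_eq_zero.mp h2 with h | h
        · exact h
        · exact absurd h hden
      exact Rat.num_eq_zero.mp this
    rw [hadef, hq1, hq2] at ha
    norm_num at ha
  · set N : ℝ := ((q.1.den : ℝ) * (q.2.den : ℝ)) with hN
    have hNpos : 0 < N := by
      rw [hN]
      positivity
    have hc1 : ((q.1.num * q.2.den : ℤ) : ℝ) = N * (q.1 : ℝ) := by
      rw [hN, Rat.cast_def]
      have : (q.1.den : ℝ) ≠ 0 := by positivity
      field_simp
      push_cast
      ring
    have hc2 : ((q.2.num * q.1.den : ℤ) : ℝ) = N * (q.2 : ℝ) := by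
      rw [hN, Rat.cast_def]
      have : (q.2.den : ℝ) ≠ 0 := by positivity
      field_simp
      push_cast
      ring
    refine ⟨N * (a * cv + b * cw), ?_⟩
    rintro y ⟨x, hx, rfl⟩
    simp only
    rw [hc1, hc2]
    have h1 : N * ((q.1:ℝ) * x.1) + N * ((q.2:ℝ) * x.2)
        = N * (a * (v.1 * x.1 + v.2 * x.2) + b * (w.1 * x.1 + w.2 * x.2)) := by
      rw [← key x]; ring
    have h2 := hv x hx
    have h3 := hw x hx
    have := key x
    nlinarith [mul_pos hNpos ha, mul_pos hNpos hb, ha.le, hb.le]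

/-- An admissible convex closed set `Ω ⊆ ℝ²` (nonempty interior, `Ω ≠ ℝ²`, not a
half-plane nor a strip with boundary of irrational slope) admits a nonzero integer
vector `(i,j)` such that `ix+jy` is bounded below on `Ω`. -/
theorem stmt_2 (Ω : Set (ℝ × ℝ)) (hconv : Convex ℝ Ω) (hcl : IsClosed Ω)
    (hint : (interior Ω).Nonempty) (hne : Ω ≠ Set.univ)
    (hHP : ¬ ∃ a b c : ℝ, ¬ normalIsRational a b ∧
      Ω = {p : ℝ × ℝ | a * p.1 + b * p.2 ≤ c})
    (hStrip : ¬ ∃ a b c₁ c₂ : ℝ, ¬ normalIsRational a b ∧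
      Ω = {p : ℝ × ℝ | c₁ ≤ a * p.1 + b * p.2 ∧ a * p.1 + b * p.2 ≤ c₂}) :
    ∃ ij : ℤ × ℤ, ij ≠ (0, 0) ∧
      BddBelow ((fun p : ℝ × ℝ => (ij.1 : ℝ) * p.1 + (ij.2 : ℝ) * p.2) '' Ω) := by
  have hΩne : Ω.Nonempty := hint.mono interior_subset
  obtain ⟨p0, hp0⟩ := (Set.ne_univ_iff_exists_notMem Ω).mp hne
  obtain ⟨v, hv0, u0, hu0, hvsep⟩ := aux_sep Ω hconv hcl hΩne hp0
  by_cases hA : ∃ w : ℝ × ℝ,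
      (∃ cw : ℝ, ∀ x ∈ Ω, cw ≤ w.1 * x.1 + w.2 * x.2) ∧ v.1 * w.2 - v.2 * w.1 ≠ 0
  · obtain ⟨w, ⟨cw, hcw⟩, hD⟩ := hA
    exact aux_two Ω v w u0 cw (fun x hx => (hvsep x hx).le) hcw hD
  · push_neg at hA
    set f : ℝ × ℝ → ℝ := fun x => v.1 * x.1 + v.2 * x.2 with hf
    have hbdd : BddBelow (f '' Ω) := ⟨u0, by rintro y ⟨x, hx, rfl⟩; exact (hvsep x hx).le⟩
    set c : ℝ := sInf (f '' Ω) with hc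
    have hcle : ∀ x ∈ Ω, c ≤ f x := fun x hx => csInf_le hbdd ⟨x, hx, rfl⟩
    have key : ∀ p : ℝ × ℝ, c ≤ f p → p ∉ Ω →
        ∃ e : ℝ, e < f p ∧ ∀ x ∈ Ω, f x < e := by
      intro p hcp hp
      obtain ⟨w, hw0, u, hu, hsep⟩ := aux_sep Ω hconv hcl hΩne hp
      have hpar := hA w ⟨u, fun x hx => (hsep x hx).le⟩
      obtain ⟨t, ht0, ht1, ht2⟩ := aux_par hv0 hw0 (sub_eq_zero.mp hpar)
      have hwx : ∀ x : ℝ × ℝ, w.1 * x.1 + w.2 * x.2 = t * f x := by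
        intro x; rw [ht1, ht2]; simp only [hf]; ring
      rcases ht0.lt_or_gt with hneg | hpos
      · refine ⟨u / t, ?_, ?_⟩
        · rw [hwx p] at hu
          rw [div_lt_iff_of_neg hneg]
          linarith
        · intro x hx
          have hx2 := hsep x hx
          rw [hwx x] at hx2
          rw [lt_div_iff_of_neg hneg]
          linarith
      · exfalso
        rw [hwx p] at hu
        have h1 : f p < u / t := by rw [lt_div_iff₀ hpos]; linarith
        have h2 : u / t ≤ c := by
          apply le_csInf (hΩne.image f)
          rintro y ⟨x, hx, rfl⟩
          have hx2 := hsep x hx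
          rw [hwx x] at hx2
          rw [div_le_iff₀ hpos]
          linarith
        exact absurd h1 (not_lt.mpr (h2.trans hcp))
    by_cases hba : BddAbove (f '' Ω)
    · -- strip case
      set d : ℝ := sSup (f '' Ω) with hd
      have hΩeq : Ω = {p : ℝ × ℝ | c ≤ v.1 * p.1 + v.2 * p.2 ∧ v.1 * p.1 + v.2 * p.2 ≤ d} := by
        ext p
        constructor
        · intro hp
          exact ⟨hcle p hp, le_csSup hba ⟨p, hp, rfl⟩⟩
        · rintro ⟨h1, h2⟩
          by_contra hp
          obtain ⟨e, he1, he2⟩ := key p h1 hp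
          have hde : d ≤ e := csSup_le (hΩne.image f) (by rintro y ⟨x, hx, rfl⟩; exact (he2 x hx).le)
          exact absurd (lt_of_le_of_lt (le_trans h2 hde) he1) (lt_irrefl _)
      have hrat : normalIsRational v.1 v.2 := by
        by_contra h
        exact hStrip ⟨v.1, v.2, c, d, h, hΩeq⟩
      obtain ⟨m, n, hmn0, hmn⟩ := hrat
      have hmnR : (((m : ℝ), (n : ℝ)) : ℝ × ℝ) ≠ 0 := by
        intro h
        rw [Prod.ext_iff] at h
        apply hmn0
        have e1 : (m : ℝ) = 0 := by simpa using h.1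
        have e2 : (n : ℝ) = 0 := by simpa using h.2
        rw [Prod.ext_iff]
        exact ⟨by exact_mod_cast e1, by exact_mod_cast e2⟩
      obtain ⟨t, ht0, ht1, ht2⟩ := aux_par hv0 hmnR hmn
      refine ⟨(m, n), hmn0, ⟨min (t * c) (t * d), ?_⟩⟩
      rintro y ⟨x, hx, rfl⟩
      have h1 := hcle x hx
      have h2 : f x ≤ d := le_csSup hba ⟨x, hx, rfl⟩
      have h3 : (m : ℝ) * x.1 + (n : ℝ) * x.2 = t * f x := by
        simp only at ht1 ht2
        rw [ht1, ht2]; simp only [hf]; ring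
      simp only
      rw [h3]
      rcases ht0.lt_or_gt with h | h
      · exact le_trans (min_le_right _ _) (by nlinarith)
      · exact le_trans (min_le_left _ _) (by nlinarith)
    · -- half-plane case
      have hΩeq : Ω = {p : ℝ × ℝ | (-v.1) * p.1 + (-v.2) * p.2 ≤ -c} := by
        ext p
        constructor
        · intro hp
          have := hcle p hp
          simp only [hf] at this
          simp only [Set.mem_setOf_eq]
          linarith
        · intro h1
          simp only [Set.mem_setOf_eq] at h1
          have h1' : c ≤ f p := by simp only [hf]; linarith
          by_contra hp
          obtain ⟨e, he1, he2⟩ := key p h1' hp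
          exact hba ⟨e, by rintro y ⟨x, hx, rfl⟩; exact (he2 x hx).le⟩
      have hrat : normalIsRational (-v.1) (-v.2) := by
        by_contra h
        exact hHP ⟨-v.1, -v.2, -c, h, hΩeq⟩
      obtain ⟨m, n, hmn0, hmn⟩ := hrat
      have hmn' : v.1 * (n : ℝ) = v.2 * (m : ℝ) := by linarith [hmn]
      have hmnR : (((m : ℝ), (n : ℝ)) : ℝ × ℝ) ≠ 0 := by
        intro h
        rw [Prod.ext_iff] at h
        apply hmn0
        have e1 : (m : ℝ) = 0 := by simpa using h.1
        have e2 : (n : ℝ) = 0 := by simpa using h.2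
        rw [Prod.ext_iff]
        exact ⟨by exact_mod_cast e1, by exact_mod_cast e2⟩
      obtain ⟨t, ht0, ht1, ht2⟩ := aux_par hv0 hmnR hmn'
      simp only at ht1 ht2
      rcases ht0.lt_or_gt with h | h
      · refine ⟨(-m, -n), ?_, ⟨-t * c, ?_⟩⟩
        · intro h0
          rw [Prod.ext_iff] at h0
          apply hmn0
          rw [Prod.ext_iff]
          constructor
          · have := h0.1; simp at this; exact this
          · have := h0.2; simp at this; exact this
        · rintro y ⟨x, hx, rfl⟩
          have h1 := hcle x hx
          simp only [hf] at h1
          have h3 : ((-m : ℤ) : ℝ) * x.1 + ((-n : ℤ) : ℝ) * x.2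
              = -t * (v.1 * x.1 + v.2 * x.2) := by push_cast; rw [ht1, ht2]; ring
          simp only
          rw [h3]
          nlinarith
      · refine ⟨(m, n), hmn0, ⟨t * c, ?_⟩⟩
        rintro y ⟨x, hx, rfl⟩
        have h1 := hcle x hx
        simp only [hf] at h1
        have h3 : ((m : ℤ) : ℝ) * x.1 + ((n : ℤ) : ℝ) * x.2
            = t * (v.1 * x.1 + v.2 * x.2) := by rw [ht1, ht2]; ring
        simp only
        rw [h3]
        nlinarith
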